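/- Let c_1, …, c_m ≥ 0 be costs and B > 0 a budget. Let G ⊆ {1,…,m} be constructed greedily: process i = 1,…,m in order; skip i if c_i > B; otherwise add i to G provided the total cost of the items currently in G is at most 2B. Then for every subset X ⊆ {1,…,m} with Σ_{i∈X} c_i ≤ B and every t ∈ {1,…,m}: Σ_{i∈G, i≤t} c_i ≥ Σ_{i∈X, i≤t} c_i. -/

import Mathlib

open Classical in
/-- `greedyPrefix c B t` : the greedy set after processing items `1, …, t` in order:
item `i` is skipped if `c i > B`, and otherwise added provided the total cost of the
items currently selected is at most `2B`. -/
noncomputable def greedyPrefix (c : ℕ → ℝ) (B : ℝ) : ℕ → Finset ℕ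
  | 0 => ∅
  | t + 1 =>
    if c (t + 1) ≤ B ∧ ∑ x ∈ greedyPrefix c B t, c x ≤ 2 * B then
      insert (t + 1) (greedyPrefix c B t)
    else greedyPrefix c B t

lemma greedy_mem_le (c : ℕ → ℝ) (B : ℝ) :
    ∀ t, ∀ i ∈ greedyPrefix c B t, 1 ≤ i ∧ i ≤ t := by
  intro t
  induction t with
  | zero => simp [greedyPrefix]
  | succ n ih =>
    intro i hi
    rw [greedyPrefix] at hi
    split at hi
    · rcases Finset.mem_insert.1 hi with h | h
      · omega
      · have := ih i h; omega
    · have := ih i hi; omega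

lemma greedy_mono (c : ℕ → ℝ) (B : ℝ) {s t : ℕ} (h : s ≤ t) :
    greedyPrefix c B s ⊆ greedyPrefix c B t := by
  induction t with
  | zero => simp_all
  | succ n ih =>
    rcases Nat.eq_or_lt_of_le h with rfl | h'
    · exact Finset.Subset.refl _
    · have := ih (by omega)
      rw [greedyPrefix]
      split
      · exact this.trans (Finset.subset_insert _ _)
      · exact this

lemma greedy_filter (c : ℕ → ℝ) (B : ℝ) {t m : ℕ} (h : t ≤ m) :
    (greedyPrefix c B m).filter (· ≤ t) = greedyPrefix c B t := by
  induction m with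
  | zero =>
    interval_cases t
    simp [greedyPrefix]
  | succ n ih =>
    rcases Nat.eq_or_lt_of_le h with rfl | h'
    · apply Finset.filter_true_of_mem
      intro i hi
      exact (greedy_mem_le c B _ i hi).2
    · have ht : t ≤ n := by omega
      rw [← ih ht]
      rw [greedyPrefix]
      split
      · rw [Finset.filter_insert]
        rw [if_neg (by omega)]
      · rfl

lemma greedy_mem_of_small (c : ℕ → ℝ) (hc : ∀ i, 0 ≤ c i) (B : ℝ) (hB : 0 < B) :
    ∀ t, (∑ x ∈ greedyPrefix c B t, c x) ≤ B →
      ∀ i, 1 ≤ i → i ≤ t → c i ≤ B → i ∈ greedyPrefix c B t := by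
  intro t
  induction t with
  | zero => intro _ i h1 h2; omega
  | succ n ih =>
    intro hsum i h1 h2 hci
    have hsub : greedyPrefix c B n ⊆ greedyPrefix c B (n+1) := greedy_mono c B (by omega)
    have hsn : (∑ x ∈ greedyPrefix c B n, c x) ≤ B :=
      le_trans (Finset.sum_le_sum_of_subset_of_nonneg hsub (fun j _ _ => hc j)) hsum
    rcases Nat.eq_or_lt_of_le h2 with rfl | h'
    · rw [greedyPrefix, if_pos ⟨hci, by linarith⟩]
      exact Finset.mem_insert_self _ _
    · exact hsub (ih hsn i h1 (by omega) hci)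

/-- prefix-domination of greedy selection.  For every subset
`X ⊆ {1,…,m}` of total cost at most `B` and every `t ∈ {1,…,m}`, the greedy set `G`
(obtained by processing `1,…,m` in order, skipping items of cost more than `B`, and
adding an item whenever the current total is at most `2B`) satisfies
`∑_{i ∈ G, i ≤ t} c i ≥ ∑_{i ∈ X, i ≤ t} c i`. -/
theorem stmt18 (m : ℕ) (c : ℕ → ℝ) (hc : ∀ i, 0 ≤ c i) (B : ℝ) (hB : 0 < B)
    (X : Finset ℕ) (hX : X ⊆ Finset.Icc 1 m) (hXB : ∑ i ∈ X, c i ≤ B)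
    (t : ℕ) (ht1 : 1 ≤ t) (htm : t ≤ m) :
    ∑ i ∈ X.filter (· ≤ t), c i
      ≤ ∑ i ∈ (greedyPrefix c B m).filter (· ≤ t), c i := by
  rw [greedy_filter c B htm]
  by_cases hs : (∑ x ∈ greedyPrefix c B t, c x) ≤ B
  · apply Finset.sum_le_sum_of_subset_of_nonneg
    · intro i hi
      rw [Finset.mem_filter] at hi
      obtain ⟨hiX, hit⟩ := hi
      have h1 : 1 ≤ i := (Finset.mem_Icc.1 (hX hiX)).1
      have hci : c i ≤ B :=
        le_trans (Finset.single_le_sum (fun j _ => hc j) hiX) hXB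
      exact greedy_mem_of_small c hc B hB t hs i h1 hit hci
    · exact fun j _ _ => hc j
  · have h1 : ∑ i ∈ X.filter (· ≤ t), c i ≤ ∑ i ∈ X, c i :=
      Finset.sum_le_sum_of_subset_of_nonneg (Finset.filter_subset _ _) (fun j _ _ => hc j)
    linarith
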